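/- (Theorem 5.1, abstract form.) Let ρ be an ordinal, a ∈ X, m : ℕ → ℕ strictly increasing, and y : ℕ → X a sequence with d (y n) a = ω^ρ · (m n) for all n ∈ ℕ (such a sequence exists whenever the enlargement has a ρ-hypernode outside the principal ρ-galaxy). Then there exists a two-way infinite family w : ℤ → (ℕ → X) of sequences such that: (i) for every k ∈ ℤ, the sequence w k is not ρ-limitedly distant from the constant sequence at a; (ii) for all k, l ∈ ℤ with k < l and every μ ∈ ℕ, {n : d (w k n) a ♯ ω^ρ · μ ≤ d (w l n) a} ∈ F; consequently (iii) for k ≠ l the sequences w k and w l are not ρ-limitedly distant. Hence there is a two-way infinite sequence of distinct ρ-galaxies, none of them the principal one, totally ordered according to their closeness to the principal ρ-galaxy. -/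

import Mathlib

open Filter Ordinal
open scoped Ordinal

universe u

namespace Ordinal

/-- Natural (Hessenberg) addition of ordinals, as `Ordinal.nadd` was defined in Mathlib
(December 2024); it is no longer in Mathlib. -/
noncomputable def nadd : Ordinal.{u} → Ordinal.{u} → Ordinal.{u}
  | a, b =>
    max (blsub.{u, u} a fun a' _ => nadd a' b) (blsub.{u, u} b fun b' _ => nadd a b')
termination_by o₁ o₂ => (o₁, o₂)

end Ordinal

infixl:65 " ♯ " => Ordinal.nadd

/-- Sequences `x, y : ℕ → X` are `ρ`-limitedly distant if there exists `μ ∈ ℕ` with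
`{n : d (x n) (y n) ≤ ω^ρ · μ} ∈ F`. -/
def LimitedlyDistant {X : Type*} (d : X → X → Ordinal) (F : Ultrafilter ℕ)
    (ρ : Ordinal) (x y : ℕ → X) : Prop :=
  ∃ μ : ℕ, {n : ℕ | d (x n) (y n) ≤ ω ^ ρ * μ} ∈ F

namespace Ordinal

theorem nadd_def' (a b : Ordinal.{u}) : a ♯ b =
    max (blsub.{u, u} a fun a' _ => a' ♯ b) (blsub.{u, u} b fun b' _ => a ♯ b') := by
  rw [nadd]

theorem lt_nadd_iff {a b c : Ordinal.{u}} :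
    a < b ♯ c ↔ (∃ b' < b, a ≤ b' ♯ c) ∨ ∃ c' < c, a ≤ b ♯ c' := by
  rw [nadd_def']; simp [lt_blsub_iff]

theorem nadd_le_iff {a b c : Ordinal.{u}} :
    b ♯ c ≤ a ↔ (∀ b' < b, b' ♯ c < a) ∧ ∀ c' < c, b ♯ c' < a := by
  rw [nadd_def']; simp [blsub_le_iff]

theorem nadd_lt_nadd_left {b c : Ordinal.{u}} (h : b < c) (a : Ordinal.{u}) : a ♯ b < a ♯ c :=
  lt_nadd_iff.2 (Or.inr ⟨b, h, le_rfl⟩)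

theorem nadd_lt_nadd_right {b c : Ordinal.{u}} (h : b < c) (a : Ordinal.{u}) : b ♯ a < c ♯ a :=
  lt_nadd_iff.2 (Or.inl ⟨b, h, le_rfl⟩)

theorem nadd_le_nadd_left {b c : Ordinal.{u}} (h : b ≤ c) (a : Ordinal.{u}) : a ♯ b ≤ a ♯ c := by
  rcases lt_or_eq_of_le h with h | rfl
  · exact (nadd_lt_nadd_left h a).le
  · exact le_rfl

theorem nadd_le_nadd_right {b c : Ordinal.{u}} (h : b ≤ c) (a : Ordinal.{u}) : b ♯ a ≤ c ♯ a := by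
  rcases lt_or_eq_of_le h with h | rfl
  · exact (nadd_lt_nadd_right h a).le
  · exact le_rfl

theorem nadd_le_nadd {a b c d : Ordinal.{u}} (h₁ : a ≤ b) (h₂ : c ≤ d) : a ♯ c ≤ b ♯ d :=
  (nadd_le_nadd_left h₂ a).trans (nadd_le_nadd_right h₁ d)

theorem nadd_comm (a b : Ordinal.{u}) : a ♯ b = b ♯ a := by
  induction a using Ordinal.induction generalizing b with
  | h a IHa =>
  induction b using Ordinal.induction with
  | h b IHb =>
  apply le_antisymm
  · refine nadd_le_iff.2 ⟨fun a' ha' => ?_, fun b' hb' => ?_⟩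
    · rw [IHa a' ha']; exact nadd_lt_nadd_left ha' b
    · rw [IHb b' hb']; exact nadd_lt_nadd_right hb' a
  · refine nadd_le_iff.2 ⟨fun b' hb' => ?_, fun a' ha' => ?_⟩
    · rw [← IHb b' hb']; exact nadd_lt_nadd_left hb' a
    · rw [← IHa a' ha']; exact nadd_lt_nadd_right ha' b

theorem nadd_assoc (a b c : Ordinal.{u}) : a ♯ b ♯ c = a ♯ (b ♯ c) := by
  induction a using Ordinal.induction generalizing b c with
  | h a IHa =>
  induction b using Ordinal.induction generalizing c with
  | h b IHb =>
  induction c using Ordinal.induction with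
  | h c IHc =>
  apply le_antisymm
  · refine nadd_le_iff.2 ⟨fun x hx => ?_, fun c' hc' => ?_⟩
    · rcases lt_nadd_iff.1 hx with ⟨a', ha', hx'⟩ | ⟨b', hb', hx'⟩
      · calc x ♯ c ≤ a' ♯ b ♯ c := nadd_le_nadd_right hx' c
          _ = a' ♯ (b ♯ c) := IHa a' ha' b c
          _ < a ♯ (b ♯ c) := nadd_lt_nadd_right ha' _
      · calc x ♯ c ≤ a ♯ b' ♯ c := nadd_le_nadd_right hx' c
          _ = a ♯ (b' ♯ c) := IHb b' hb' c
          _ < a ♯ (b ♯ c) := nadd_lt_nadd_left (nadd_lt_nadd_right hb' c) a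
    · rw [IHc c' hc']; exact nadd_lt_nadd_left (nadd_lt_nadd_left hc' b) a
  · refine nadd_le_iff.2 ⟨fun a' ha' => ?_, fun x hx => ?_⟩
    · rw [← IHa a' ha']; exact nadd_lt_nadd_right (nadd_lt_nadd_right ha' b) c
    · rcases lt_nadd_iff.1 hx with ⟨b', hb', hx'⟩ | ⟨c', hc', hx'⟩
      · calc a ♯ x ≤ a ♯ (b' ♯ c) := nadd_le_nadd_left hx' a
          _ = a ♯ b' ♯ c := (IHb b' hb' c).symm
          _ < a ♯ b ♯ c := nadd_lt_nadd_right (nadd_lt_nadd_left hb' a) c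
      · calc a ♯ x ≤ a ♯ (b ♯ c') := nadd_le_nadd_left hx' a
          _ = a ♯ b ♯ c' := (IHc c' hc').symm
          _ < a ♯ b ♯ c := nadd_lt_nadd_left hc' _

theorem nadd_left_comm (a b c : Ordinal.{u}) : a ♯ (b ♯ c) = b ♯ (a ♯ c) := by
  rw [← nadd_assoc, nadd_comm a b, nadd_assoc]

theorem nadd_right_comm (a b c : Ordinal.{u}) : a ♯ b ♯ c = a ♯ c ♯ b := by
  rw [nadd_assoc, nadd_comm b c, ← nadd_assoc]

@[simp]
theorem nadd_zero (a : Ordinal.{u}) : a ♯ 0 = a := by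
  induction a using Ordinal.induction with
  | h a IH =>
  apply le_antisymm
  · refine nadd_le_iff.2 ⟨fun a' ha' => ?_, fun c' hc' => by simp at hc'⟩
    rw [IH a' ha']; exact ha'
  · refine le_of_forall_lt fun z hz => ?_
    have := nadd_lt_nadd_right hz 0
    rwa [IH z hz] at this

theorem add_le_nadd (a b : Ordinal.{u}) : a + b ≤ a ♯ b := by
  induction b using Ordinal.induction with
  | h b IH =>
  refine le_of_forall_lt fun z hz => ?_
  rcases lt_or_ge z a with h | h
  · calc z < a := h
      _ = a ♯ 0 := (nadd_zero a).symm
      _ ≤ a ♯ b := nadd_le_nadd_left zero_le a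
  · have e : a + (z - a) = z := Ordinal.add_sub_cancel_of_le h
    have hb : z - a < b := by
      rw [← e] at hz; exact (add_lt_add_iff_left a).1 hz
    calc z = a + (z - a) := e.symm
      _ ≤ a ♯ (z - a) := IH _ hb
      _ < a ♯ b := nadd_lt_nadd_left hb a

theorem le_of_nadd_le_nadd_left {a b c : Ordinal.{u}} (h : a ♯ b ≤ a ♯ c) : b ≤ c :=
  not_lt.1 fun h' => absurd h (not_le.2 (nadd_lt_nadd_left h' a))

end Ordinal

section AuxNadd

/-- Natural sum of a multiple of `γ` with a remainder `< γ`, when `γ` is closed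
under natural addition. -/
lemma nadd_mul_nat_of_lt (γ : Ordinal) (hγ0 : γ ≠ 0)
    (hγ : ∀ r s, r < γ → s < γ → r ♯ s < γ) :
    ∀ (k : ℕ) (r : Ordinal), r < γ → γ * k ♯ r = γ * k + r := by
  intro k
  induction k using Nat.strong_induction_on with
  | _ k IHk =>
    intro r
    induction r using Ordinal.induction with
    | h r IHr =>
      intro hr
      refine le_antisymm (nadd_le_iff.2 ⟨?_, ?_⟩) (add_le_nadd _ _)
      · intro b' hb'
        have hdiv : b' / γ < (k : Ordinal) := (Ordinal.div_lt hγ0).2 hb'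
        obtain ⟨k', hk'⟩ := lt_omega0.1 (hdiv.trans (nat_lt_omega0 k))
        have hk'k : k' < k := by exact_mod_cast hk' ▸ hdiv
        have hu : b' % γ < γ := mod_lt b' hγ0
        have hb'eq : γ * k' + b' % γ = b' := by rw [← hk']; exact div_add_mod b' γ
        have hble : b' ≤ γ * k' ♯ b' % γ := by nth_rewrite 1 [← hb'eq]; exact add_le_nadd _ _
        have h1 : b' ♯ r ≤ (γ * k' ♯ b' % γ) ♯ r := nadd_le_nadd_right hble r
        have h2 : (γ * k' ♯ b' % γ) ♯ r = γ * k' ♯ (b' % γ ♯ r) := nadd_assoc _ _ _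
        have h3 : b' % γ ♯ r < γ := hγ _ _ hu hr
        have h4 : γ * k' ♯ (b' % γ ♯ r) = γ * k' + (b' % γ ♯ r) := IHk k' hk'k _ h3
        calc b' ♯ r ≤ γ * k' + (b' % γ ♯ r) := by rw [← h4, ← h2]; exact h1
          _ < γ * k' + γ := add_lt_add_right h3 _
          _ = γ * (k' + 1 : ℕ) := by push_cast; rw [mul_add_one]
          _ ≤ γ * k := by
              exact mul_le_mul_right (by exact_mod_cast Nat.succ_le_of_lt hk'k) γ
          _ ≤ γ * k + r := le_self_add
      · intro r' hr'
        rw [IHr r' hr' (hr'.trans hr)]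
        exact add_lt_add_right hr' _

lemma mul_nat_nadd_mul_nat (γ : Ordinal) (hγ0 : γ ≠ 0)
    (hγ : ∀ r s, r < γ → s < γ → r ♯ s < γ) :
    ∀ i j : ℕ, γ * i ♯ γ * j ≤ γ * (↑(i + j) : Ordinal) := by
  have M := nadd_mul_nat_of_lt γ hγ0 hγ
  suffices H : ∀ n : ℕ, ∀ i j : ℕ, i + j = n → γ * i ♯ γ * j ≤ γ * (↑(i + j) : Ordinal) by
    intro i j; exact H (i + j) i j rfl
  intro n
  induction n using Nat.strong_induction_on with
  | _ n IH =>
    intro i j hn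
    have key : ∀ i' j' : ℕ, i' + j' = i + j → ∀ b' < γ * (i' : Ordinal),
        b' ♯ γ * j' < γ * (↑(i' + j') : Ordinal) := by
      intro i' j' hsum b' hb'
      have hdiv : b' / γ < (i' : Ordinal) := (Ordinal.div_lt hγ0).2 hb'
      obtain ⟨i'', hi''⟩ := lt_omega0.1 (hdiv.trans (nat_lt_omega0 i'))
      have hii : i'' < i' := by exact_mod_cast hi'' ▸ hdiv
      have hu : b' % γ < γ := mod_lt b' hγ0
      have hb'eq : γ * i'' + b' % γ = b' := by rw [← hi'']; exact div_add_mod b' γ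
      calc b' ♯ γ * j' ≤ (γ * i'' ♯ b' % γ) ♯ γ * j' :=
            nadd_le_nadd_right (by nth_rewrite 1 [← hb'eq]; exact add_le_nadd _ _ :
              b' ≤ γ * (i'' : Ordinal) ♯ b' % γ) _
        _ = (γ * i'' ♯ γ * j') ♯ b' % γ := nadd_right_comm _ _ _
        _ ≤ γ * (↑(i'' + j') : Ordinal) ♯ b' % γ := by
            exact nadd_le_nadd_right (IH (i'' + j') (by omega) i'' j' rfl) _
        _ = γ * (↑(i'' + j') : Ordinal) + b' % γ := M _ _ hu
        _ < γ * (↑(i'' + j') : Ordinal) + γ := add_lt_add_right hu _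
        _ = γ * (↑(i'' + j' + 1) : Ordinal) := by push_cast; rw [mul_add_one]
        _ ≤ γ * (↑(i' + j') : Ordinal) := by
            exact mul_le_mul_right (by exact_mod_cast by omega) γ
    refine nadd_le_iff.2 ⟨fun b' hb' => key i j rfl b' hb', fun c' hc' => ?_⟩
    rw [nadd_comm]
    have := key j i (by omega) c' hc'
    rwa [Nat.add_comm j i] at this

/-- `ω ^ ρ` is closed under natural addition. -/
lemma omega0_opow_nadd_lt (ρ : Ordinal) :
    ∀ a b : Ordinal, a < ω ^ ρ → b < ω ^ ρ → a ♯ b < ω ^ ρ := by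
  induction ρ using Ordinal.limitRecOn with
  | zero =>
    intro a b ha hb
    rw [opow_zero] at *
    rw [lt_one_iff_zero] at ha hb
    simp [ha, hb]
  | add_one t IH =>
    intro a b ha hb
    rw [opow_add_one] at *
    set γ := ω ^ t with hγdef
    have hγ0 : γ ≠ 0 := opow_ne_zero t omega0_ne_zero
    obtain ⟨pa, hpa, ha'⟩ := (lt_mul_iff_of_isSuccLimit isSuccLimit_omega0).1 ha
    obtain ⟨pb, hpb, hb'⟩ := (lt_mul_iff_of_isSuccLimit isSuccLimit_omega0).1 hb
    have hi : a / γ < ω := lt_of_lt_of_le ((Ordinal.div_lt hγ0).2 ha') hpa.le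
    have hj : b / γ < ω := lt_of_lt_of_le ((Ordinal.div_lt hγ0).2 hb') hpb.le
    obtain ⟨i, hieq⟩ := lt_omega0.1 hi
    obtain ⟨j, hjeq⟩ := lt_omega0.1 hj
    have hu : a % γ < γ := mod_lt a hγ0
    have hs : b % γ < γ := mod_lt b hγ0
    have haeq : γ * i + a % γ = a := by rw [← hieq]; exact div_add_mod a γ
    have hbeq : γ * j + b % γ = b := by rw [← hjeq]; exact div_add_mod b γ
    have M := nadd_mul_nat_of_lt γ hγ0 IH
    have hale : a ≤ γ * i ♯ a % γ := by nth_rewrite 1 [← haeq]; exact add_le_nadd _ _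
    have hble : b ≤ γ * j ♯ b % γ := by nth_rewrite 1 [← hbeq]; exact add_le_nadd _ _
    calc a ♯ b ≤ (γ * i ♯ a % γ) ♯ (γ * j ♯ b % γ) := nadd_le_nadd hale hble
      _ = (γ * i ♯ γ * j) ♯ (a % γ ♯ b % γ) := by
          rw [nadd_assoc (γ * (i : Ordinal)) (a % γ) (γ * (j : Ordinal) ♯ b % γ),
            nadd_left_comm (a % γ) (γ * (j : Ordinal)) (b % γ),
            ← nadd_assoc (γ * (i : Ordinal)) (γ * (j : Ordinal)) (a % γ ♯ b % γ)]
      _ ≤ γ * (↑(i + j) : Ordinal) ♯ (a % γ ♯ b % γ) :=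
          nadd_le_nadd_right (mul_nat_nadd_mul_nat γ hγ0 IH i j) _
      _ = γ * (↑(i + j) : Ordinal) + (a % γ ♯ b % γ) := M _ _ (IH _ _ hu hs)
      _ < γ * (↑(i + j) : Ordinal) + γ := add_lt_add_right (IH _ _ hu hs) _
      _ = γ * (↑(i + j + 1) : Ordinal) := by push_cast; rw [mul_add_one]
      _ < γ * ω := (mul_lt_mul_iff_right₀ (opow_pos t omega0_pos)).2 (nat_lt_omega0 _)
  | limit ρ hρ IH =>
    intro a b ha hb
    have hex : ∀ x : Ordinal, x < ω ^ ρ → ∃ s < ρ, x < ω ^ s := by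
      intro x hx
      by_contra h
      push_neg at h
      exact hx.not_ge ((opow_le_of_isSuccLimit omega0_ne_zero hρ).2 fun s hs => h s hs)
    obtain ⟨s₁, hs₁, ha'⟩ := hex a ha
    obtain ⟨s₂, hs₂, hb'⟩ := hex b hb
    have ha'' : a < ω ^ max s₁ s₂ :=
      ha'.trans_le (opow_le_opow_right omega0_pos (le_max_left _ _))
    have hb'' : b < ω ^ max s₁ s₂ :=
      hb'.trans_le (opow_le_opow_right omega0_pos (le_max_right _ _))
    exact (IH _ (max_lt hs₁ hs₂) a b ha'' hb'').trans_le
      (opow_le_opow_right omega0_pos (max_lt hs₁ hs₂).le)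

lemma omega0_opow_mul_nadd (ρ : Ordinal) (p q : ℕ) :
    ω ^ ρ * p ♯ ω ^ ρ * q ≤ ω ^ ρ * (↑(p + q) : Ordinal) :=
  mul_nat_nadd_mul_nat _ (opow_ne_zero ρ omega0_ne_zero) (omega0_opow_nadd_lt ρ) p q

end AuxNadd

theorem exists_two_way_infinite_sequence_of_galaxies
    (X : Type*) (d : X → X → Ordinal)
    (hd0 : ∀ a b : X, d a b = 0 ↔ a = b)
    (hdsymm : ∀ a b : X, d a b = d b a)
    (hdtri : ∀ a b c : X, d a c ≤ d a b ♯ d b c)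
    (F : Ultrafilter ℕ) (hF : ∀ s : Set ℕ, sᶜ.Finite → s ∈ F)
    (ρ : Ordinal) (a : X) (m : ℕ → ℕ) (hm : StrictMono m)
    (y : ℕ → X) (hy : ∀ n : ℕ, d (y n) a = ω ^ ρ * (m n)) :
    ∃ w : ℤ → ℕ → X,
      (∀ k : ℤ, ¬ LimitedlyDistant d F ρ (w k) (fun _ => a)) ∧
      (∀ k l : ℤ, k < l → ∀ μ : ℕ,
        {n : ℕ | d (w k n) a ♯ ω ^ ρ * μ ≤ d (w l n) a} ∈ F) ∧
      (∀ k l : ℤ, k ≠ l → ¬ LimitedlyDistant d F ρ (w k) (w l)) := by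
  set g : ℤ → ℕ → ℕ := fun k n => ((n : ℤ) * (n + k)).toNat with hg
  have hmadd : ∀ t s : ℕ, m t + s ≤ m (t + s) := by
    intro t s
    induction s with
    | zero => simp
    | succ s ih =>
      have h : m (t + s) < m (t + s + 1) := hm (Nat.lt_succ_self _)
      have h2 : m (t + (s + 1)) = m (t + s + 1) := rfl
      omega
  have hmle : ∀ t : ℕ, t ≤ m t := fun t => hm.le_apply
  have C1 : ∀ k l : ℤ, k < l → ∀ n : ℕ, k.natAbs ≤ n → g k n + n ≤ g l n := by
    intro k l hkl n hn
    have h0 : (0 : ℤ) ≤ (n : ℤ) * (n + k) := by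
      have : (0 : ℤ) ≤ n + k := by omega
      positivity
    have h1 : (n : ℤ) * (n + k) + n ≤ (n : ℤ) * (n + l) := by
      have he : (n : ℤ) * (n + k) + n = n * (n + k + 1) := by ring
      rw [he]
      exact mul_le_mul_of_nonneg_left (by omega) (Int.natCast_nonneg n)
    calc g k n + n = (((n : ℤ) * (n + k)) + (n : ℤ)).toNat := by
          rw [hg]; simp only []
          rw [Int.toNat_add h0 (Int.natCast_nonneg n), Int.toNat_natCast]
      _ ≤ g l n := Int.toNat_le_toNat h1
  have C2 : ∀ (k : ℤ) (n : ℕ), k.natAbs + 1 ≤ n → n ≤ g k n := by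
    intro k n hn
    have h1 : (n : ℤ) * 1 ≤ (n : ℤ) * (n + k) := by
      exact mul_le_mul_of_nonneg_left (by omega) (Int.natCast_nonneg n)
    have := Int.toNat_le_toNat h1
    simpa using this
  have hpos : (0 : Ordinal) < ω ^ ρ := opow_pos ρ omega0_pos
  have part2 : ∀ k l : ℤ, k < l → ∀ μ : ℕ,
      {n : ℕ | d (y (g k n)) a ♯ ω ^ ρ * μ ≤ d (y (g l n)) a} ∈ F := by
    intro k l hkl μ
    apply hF
    apply (Set.finite_lt_nat (k.natAbs + μ)).subset
    intro n hn
    simp only [Set.mem_compl_iff, Set.mem_setOf_eq, not_le] at hn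
    simp only [Set.mem_setOf_eq]
    by_contra hge
    push_neg at hge
    refine hn.not_ge ?_
    have hmm : m (g k n) + μ ≤ m (g l n) := by
      have h1 : g k n + n ≤ g l n := C1 k l hkl n (by omega)
      have h2 := hmadd (g k n) n
      have h3 := hm.monotone h1
      omega
    calc d (y (g k n)) a ♯ ω ^ ρ * μ = ω ^ ρ * (m (g k n)) ♯ ω ^ ρ * μ := by rw [hy]
      _ ≤ ω ^ ρ * (↑(m (g k n) + μ) : Ordinal) := omega0_opow_mul_nadd ρ _ μ
      _ ≤ ω ^ ρ * (↑(m (g l n)) : Ordinal) := by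
          exact mul_le_mul_right (by exact_mod_cast hmm) _
      _ = d (y (g l n)) a := (hy _).symm
  refine ⟨fun k n => y (g k n), ?_, fun k l hkl μ => part2 k l hkl μ, ?_⟩
  · -- (i)
    rintro k ⟨μ, hμ⟩
    have hT : {n : ℕ | ω ^ ρ * μ < d (y (g k n)) a} ∈ F := by
      apply hF
      apply (Set.finite_lt_nat (k.natAbs + μ + 1)).subset
      intro n hn
      simp only [Set.mem_compl_iff, Set.mem_setOf_eq, not_lt] at hn
      simp only [Set.mem_setOf_eq]
      by_contra hge
      push_neg at hge
      have hlt : ω ^ ρ * μ < d (y (g k n)) a := by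
        rw [hy]
        refine (mul_lt_mul_iff_right₀ hpos).2 ?_
        exact_mod_cast lt_of_lt_of_le (by omega : μ < n) ((C2 k n (by omega)).trans (hmle _))
      exact hlt.not_ge hn
    obtain ⟨n, hn1, hn2⟩ := F.toFilter.nonempty_of_mem (inter_mem hμ hT)
    simp only [Set.mem_setOf_eq] at hn1 hn2
    exact absurd hn1 hn2.not_ge
  · -- (iii)
    have main : ∀ k l : ℤ, k < l →
        ¬ LimitedlyDistant d F ρ (fun n => y (g k n)) (fun n => y (g l n)) := by
      rintro k l hkl ⟨μ, hμ⟩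
      have hT := part2 k l hkl (μ + 1)
      obtain ⟨n, hn1, hn2⟩ := F.toFilter.nonempty_of_mem (inter_mem hμ hT)
      simp only [Set.mem_setOf_eq] at hn1 hn2
      have h3 : d (y (g l n)) a ≤ d (y (g l n)) (y (g k n)) ♯ d (y (g k n)) a := hdtri _ _ _
      have h4 : d (y (g k n)) a ♯ ω ^ ρ * (↑(μ + 1) : Ordinal) ≤
          ω ^ ρ * μ ♯ d (y (g k n)) a := by
        refine hn2.trans (h3.trans (nadd_le_nadd_right ?_ _))
        rw [hdsymm]
        exact hn1
      rw [nadd_comm (ω ^ ρ * (μ : Ordinal)) (d (y (g k n)) a)] at h4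
      have h5 : ω ^ ρ * (↑(μ + 1) : Ordinal) ≤ ω ^ ρ * (μ : Ordinal) :=
        le_of_nadd_le_nadd_left h4
      have h6 : ω ^ ρ * (μ : Ordinal) < ω ^ ρ * (↑(μ + 1) : Ordinal) :=
        (mul_lt_mul_iff_right₀ hpos).2 (by exact_mod_cast Nat.lt_succ_self μ)
      exact h6.not_ge h5
    intro k l hne hLD
    rcases lt_or_gt_of_ne hne with h | h
    · exact main k l h hLD
    · obtain ⟨μ, hμ⟩ := hLD
      refine main l k h ⟨μ, ?_⟩
      have hset : {n : ℕ | d (y (g l n)) (y (g k n)) ≤ ω ^ ρ * μ} =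
          {n : ℕ | d (y (g k n)) (y (g l n)) ≤ ω ^ ρ * μ} := by
        ext n; simp only [Set.mem_setOf_eq]; rw [hdsymm]
      exact hset ▸ hμ
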